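/- Stochastic enumeration with budget B ≥ 1 on a finite rooted tree T is an unbiased estimator of the number of leaves of T: the expected value of the output of Algorithm S equals the number of leaves. -/

import Mathlib

/-- A finite rooted tree. -/
inductive RTree where
  | node : List RTree → RTree

namespace RTree

/-- The children of the root. -/
def children : RTree → List RTree
  | node cs => cs

/-- The number of leaves of a finite rooted tree. -/
def leaves : RTree → ℕ
  | node [] => 1
  | node (c :: cs) => ((c :: cs).attach.map (fun x => leaves x.1)).sum
decreasing_by
  all_goals
    have h := List.sizeOf_lt_of_mem x.2
    simp only [List.cons.sizeOf_spec, RTree.node.sizeOf_spec] at h ⊢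
    omega

/-- The depth (height) of a finite rooted tree. -/
def depth : RTree → ℕ
  | node [] => 0
  | node (c :: cs) => 1 + ((c :: cs).attach.map (fun x => depth x.1)).foldr max 0
decreasing_by
  all_goals
    have h := List.sizeOf_lt_of_mem x.2
    simp only [List.cons.sizeOf_spec, RTree.node.sizeOf_spec] at h ⊢
    omega

/-- The number of leaves contained in a population `H` of nodes
(nodes are identified with the subtrees rooted at them). -/
def leafCnt (H : Multiset RTree) : ℕ :=
  (H.map (fun t => if t.children.isEmpty then 1 else 0)).sum

open Classical in
/-- **Algorithm S (stochastic enumeration)** with budget `B`, as a probability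
distribution over outputs.  Given the current weight `w` and population `H`
(a multiset of nodes of the tree), it adds the term `w·c(H)/|H|` and continues
with the population `S(H)` of all children of nodes of `H`: if `|S(H)| ≤ B`
the whole population is kept, and otherwise a uniformly random `B`-element
subset of `S(H)` is kept; the weight is multiplied by `|S(H)|/|H|`.  The
recursion stops when `S(H) = ∅` (the `fuel` parameter bounds the number of
steps; any `fuel ≥ depth + 2` suffices). -/
noncomputable def seFull (B : ℕ) : ℕ → ℝ → Multiset RTree → PMF ℝ
  | 0, _, _ => PMF.pure 0
  | fuel + 1, w, H =>
      if H = 0 then PMF.pure 0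
      else
        let S : Multiset RTree := H.bind (fun t => (t.children : Multiset RTree))
        let term : ℝ := w * (leafCnt H : ℝ) / (Multiset.card H : ℝ)
        let w' : ℝ := w * (Multiset.card S : ℝ) / (Multiset.card H : ℝ)
        if S = 0 then PMF.pure term
        else if hcard : Multiset.card S ≤ B then
          (seFull B fuel w' S).map (fun x => term + x)
        else
          (PMF.ofMultiset (Multiset.powersetCard B S)
            (by
              intro h0
              have hc : (Multiset.card S).choose B = 0 := by
                rw [← Multiset.card_powersetCard, h0]
                simp
              have hpos := Nat.choose_pos (le_of_lt (lt_of_not_ge hcard))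
              omega)).bind (fun H' =>
            (seFull B fuel w' H').map (fun x => term + x))

end RTree

noncomputable instance : DecidableEq RTree := Classical.decEq _

namespace RTree

lemma depth_node (cs : List RTree) :
    depth (node cs) = if cs.isEmpty then 0 else 1 + (cs.map depth).foldr max 0 := by
  cases cs with
  | nil => simp [depth]
  | cons c cs' => rw [depth, List.attach_map_val]; rfl

lemma leaves_node (cs : List RTree) :
    leaves (node cs) = if cs.isEmpty then 1 else (cs.map leaves).sum := by
  cases cs with
  | nil => simp [leaves]
  | cons c cs' => rw [leaves, List.attach_map_val]; rfl

lemma le_foldr_max {l : List ℕ} {x : ℕ} (h : x ∈ l) : x ≤ l.foldr max 0 := by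
  induction l with
  | nil => simp at h
  | cons a l ih =>
    rcases List.mem_cons.1 h with rfl | h'
    · exact le_max_left _ _
    · exact le_trans (ih h') (le_max_right _ _)

lemma depth_child {t c : RTree} (h : c ∈ t.children) : depth c < depth t := by
  cases t with
  | node cs =>
    cases cs with
    | nil => simp [children] at h
    | cons a cs' =>
      have hc : c ∈ (a :: cs') := h
      have : depth c ≤ ((a :: cs').map depth).foldr max 0 :=
        le_foldr_max (List.mem_map_of_mem (f := depth) hc)
      rw [depth_node]
      simp only [List.isEmpty_cons, Bool.false_eq_true, if_false]
      omega

/-- max depth over a population -/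
def md (H : Multiset RTree) : ℕ := (H.map depth).fold max 0

@[simp] lemma md_zero : md 0 = 0 := rfl

lemma md_cons (a : RTree) (H : Multiset RTree) : md (a ::ₘ H) = max (depth a) (md H) := by
  simp [md, Multiset.fold_cons_left]

lemma le_md {H : Multiset RTree} {x : RTree} (h : x ∈ H) : depth x ≤ md H := by
  induction H using Multiset.induction_on with
  | empty => simp at h
  | cons a s ih =>
    rw [md_cons]
    rcases Multiset.mem_cons.1 h with rfl | h'
    · exact le_max_left _ _
    · exact le_trans (ih h') (le_max_right _ _)

lemma md_lt {H : Multiset RTree} {k : ℕ} (hk : 0 < k) (h : ∀ x ∈ H, depth x < k) :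
    md H < k := by
  induction H using Multiset.induction_on with
  | empty => simpa using hk
  | cons a s ih =>
    rw [md_cons]
    exact max_lt (h a (Multiset.mem_cons_self a s)) (ih fun x hx => h x (Multiset.mem_cons_of_mem hx))

/-- total number of leaves over a population -/
def L (H : Multiset RTree) : ℕ := (H.map leaves).sum

@[simp] lemma L_zero : L 0 = 0 := rfl

lemma leaves_split (t : RTree) :
    leaves t = (if t.children.isEmpty then 1 else 0) + (t.children.map leaves).sum := by
  cases t with
  | node cs =>
    cases cs with
    | nil => simp [leaves, children]
    | cons c cs' => rw [leaves_node]; simp [children]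

lemma L_eq (H : Multiset RTree) :
    L H = leafCnt H + L (H.bind fun t => (t.children : Multiset RTree)) := by
  unfold L leafCnt
  rw [Multiset.map_bind, Multiset.sum_bind, ← Multiset.sum_map_add]
  apply congrArg
  apply Multiset.map_congr rfl
  intro t _
  rw [Multiset.map_coe, Multiset.sum_coe]
  exact leaves_split t

lemma sum_powersetCard (f : Multiset RTree → ℕ) : True := trivial

lemma powerset_sum (f : RTree → ℕ) (s : Multiset RTree) : ∀ (k : ℕ),
    ((Multiset.powersetCard (k+1) s).map (fun H' => (H'.map f).sum)).sum
      = Nat.choose (Multiset.card s - 1) k * (s.map f).sum := by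
  induction s using Multiset.induction_on with
  | empty => intro k; simp [Multiset.powersetCard_zero_right]
  | cons a s ih =>
    intro k
    rw [Multiset.powersetCard_cons, Multiset.map_add, Multiset.sum_add, Multiset.map_map]
    have h2 : ((Multiset.powersetCard k s).map
        ((fun H' : Multiset RTree => (H'.map f).sum) ∘ (fun H' => a ::ₘ H'))).sum
        = Multiset.card (Multiset.powersetCard k s) * f a
          + ((Multiset.powersetCard k s).map (fun H' => (H'.map f).sum)).sum := by
      have : ((fun H' : Multiset RTree => (H'.map f).sum) ∘ (fun H' => a ::ₘ H'))
          = fun H' => f a + (H'.map f).sum := by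
        funext H'; simp [Multiset.map_cons, Multiset.sum_cons]
      rw [this, Multiset.sum_map_add]
      simp [Multiset.map_const', Multiset.sum_replicate, mul_comm]
    rw [h2, Multiset.card_powersetCard]
    cases k with
    | zero =>
      simp only [Multiset.powersetCard_zero_left]
      simp [ih 0, Multiset.map_cons, Multiset.sum_cons] <;> omega
    | succ j =>
      rw [ih (j+1), ih j]
      have hcs : Multiset.card (a ::ₘ s) = Multiset.card s + 1 := by simp
      rw [hcs]
      rcases Nat.eq_zero_or_pos (Multiset.card s) with h0 | hpos
      · have : s = 0 := Multiset.card_eq_zero.1 h0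
        subst this
        simp
      · obtain ⟨m, hm⟩ : ∃ m, Multiset.card s = m + 1 := ⟨Multiset.card s - 1, by omega⟩
        rw [hm]
        simp only [Nat.add_sub_cancel, Multiset.map_cons, Multiset.sum_cons]
        have pascal : Nat.choose (m+1) (j+1) = Nat.choose m j + Nat.choose m (j+1) :=
          Nat.choose_succ_succ m j
        rw [pascal]
        ring


end RTree


open MeasureTheory

section EV

lemma integrable_id_dirac (a : ℝ) : Integrable (fun x : ℝ => x) (MeasureTheory.Measure.dirac a) := by
  refine ⟨measurable_id.aestronglyMeasurable, ?_⟩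
  simp [HasFiniteIntegral, MeasureTheory.lintegral_dirac]

/-- `p` has expectation `μ`. -/
def EV (p : PMF ℝ) (μ : ℝ) : Prop :=
  Integrable (fun x : ℝ => x) p.toMeasure ∧ (∫ x, x ∂p.toMeasure) = μ

lemma EV_pure (a : ℝ) : EV (PMF.pure a) a := by
  rw [EV, PMF.toMeasure_pure]
  exact ⟨integrable_id_dirac a, integral_dirac _ a⟩

lemma EV_map_add (c : ℝ) {p : PMF ℝ} {μ : ℝ} (h : EV p μ) :
    EV (p.map (fun x => c + x)) (c + μ) := by
  have hm : Measurable fun x : ℝ => c + x := measurable_const.add measurable_id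
  have hint : Integrable (fun x : ℝ => c + x) p.toMeasure :=
    (integrable_const c).add h.1
  have hmeq : (p.map fun x => c + x).toMeasure = p.toMeasure.map (fun x => c + x) :=
    (PMF.toMeasure_map (fun x => c + x) p hm).symm
  constructor
  · rw [hmeq]
    exact (integrable_map_measure measurable_id.aestronglyMeasurable hm.aemeasurable).2 hint
  · rw [hmeq, integral_map (f := fun y : ℝ => y) hm.aemeasurable measurable_id'.aestronglyMeasurable,
      integral_add (integrable_const c) h.1, integral_const]
    have := h.2
    simp only [probReal_univ, smul_eq_mul, one_mul]
    rw [this]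

lemma bind_toMeasure_eq {α : Type*} [MeasurableSpace α] (p : PMF α) (q : α → PMF ℝ)
    (s : Finset α) (hs : p.support ⊆ s) :
    (p.bind q).toMeasure = ∑ a ∈ s, p a • (q a).toMeasure := by
  ext E hE
  rw [PMF.toMeasure_bind_apply p q E hE, Measure.finset_sum_apply]
  rw [tsum_eq_sum (s := s) (fun a ha => by
    have : p a = 0 := by
      by_contra h0
      exact ha (hs h0)
    simp [this])]
  simp [Measure.smul_apply, smul_eq_mul]

lemma EV_bind {α : Type*} [MeasurableSpace α] (p : PMF α) (q : α → PMF ℝ)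
    (s : Finset α) (hs : p.support ⊆ s) (μ : α → ℝ)
    (h : ∀ a ∈ s, EV (q a) (μ a)) :
    EV (p.bind q) (∑ a ∈ s, (p a).toReal * μ a) := by
  have hmeq := bind_toMeasure_eq p q s hs
  have hint : ∀ a ∈ s, Integrable (fun x : ℝ => x) (p a • (q a).toMeasure) :=
    fun a ha => ((h a ha).1).smul_measure (PMF.apply_ne_top p a)
  constructor
  · rw [hmeq]
    exact integrable_finset_sum_measure.2 hint
  · rw [hmeq, integral_finset_sum_measure hint]
    refine Finset.sum_congr rfl fun a ha => ?_
    rw [integral_smul_measure, (h a ha).2, smul_eq_mul]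

end EV


open RTree MeasureTheory

instance : MeasurableSpace (Multiset RTree) := ⊤

lemma count_irrel {α : Type*} (i1 i2 : DecidableEq α) (a : α) (s : Multiset α) :
    @Multiset.count α i1 a s = @Multiset.count α i2 a s := by
  haveI : Subsingleton (DecidableEq α) :=
    ⟨fun d1 d2 => funext fun x => funext fun y => Subsingleton.elim _ _⟩
  rw [Subsingleton.elim i1 i2]

lemma EV_seFull (B : ℕ) (hB : 1 ≤ B) :
    ∀ fuel (w : ℝ) (H : Multiset RTree), H ≠ 0 → md H + 1 ≤ fuel →
      EV (seFull B fuel w H) (w * (L H : ℝ) / (Multiset.card H : ℝ)) := by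
  intro fuel
  induction fuel with
  | zero => intro w H hH hf; omega
  | succ fuel ih =>
    intro w H hH hf
    simp only [seFull]
    rw [if_neg hH]
    set S : Multiset RTree := H.bind (fun t => (t.children : Multiset RTree)) with hSdef
    set term : ℝ := w * (leafCnt H : ℝ) / (Multiset.card H : ℝ) with htermdef
    set w' : ℝ := w * (Multiset.card S : ℝ) / (Multiset.card H : ℝ) with hw'def
    have hcH : (0:ℝ) < (Multiset.card H : ℝ) := by
      exact_mod_cast Multiset.card_pos.2 hH
    have hLH : L H = leafCnt H + L S := L_eq H
    by_cases hS0 : S = 0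
    · rw [if_pos hS0]
      have : w * (L H : ℝ) / (Multiset.card H : ℝ) = term := by
        rw [hLH, hS0, L_zero, add_zero, htermdef]
      rw [this]
      exact EV_pure term
    · rw [if_neg hS0]
      -- depth bookkeeping
      have hdepthS : ∀ x ∈ S, depth x < md H := by
        intro x hx
        rw [hSdef] at hx
        rcases Multiset.mem_bind.1 hx with ⟨t, ht, hxt⟩
        exact lt_of_lt_of_le (depth_child (Multiset.mem_coe.1 hxt)) (le_md ht)
      have hmdH : 0 < md H := by
        rcases Multiset.exists_mem_of_ne_zero hS0 with ⟨x, hx⟩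
        have := hdepthS x hx
        omega
      have hmdS : md S + 1 ≤ fuel := by
        have := md_lt hmdH hdepthS
        omega
      have hcS : (0:ℝ) < (Multiset.card S : ℝ) := by
        exact_mod_cast Multiset.card_pos.2 hS0
      by_cases hcard : Multiset.card S ≤ B
      · rw [dif_pos hcard]
        have h1 := EV_map_add term (ih w' S hS0 hmdS)
        have h2 : term + w' * (L S : ℝ) / (Multiset.card S : ℝ)
            = w * (L H : ℝ) / (Multiset.card H : ℝ) := by
          rw [htermdef, hw'def, hLH]
          push_cast
          field_simp
        rwa [h2] at h1
      · rw [dif_neg hcard]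
        set m : Multiset (Multiset RTree) := Multiset.powersetCard B S with hmdef
        have hn : B < Multiset.card S := lt_of_not_ge hcard
        have hm0 : m ≠ 0 := by
          intro h0
          have hc : (Multiset.card S).choose B = 0 := by
            rw [← Multiset.card_powersetCard, ← hmdef, h0]; simp
          have hpos := Nat.choose_pos (le_of_lt hn)
          omega
        set p : PMF (Multiset RTree) := PMF.ofMultiset m hm0 with hpdef
        set μ : Multiset RTree → ℝ :=
          fun a => term + w' * (L a : ℝ) / (Multiset.card a : ℝ) with hmudef
        have hmem : ∀ a ∈ m, a ≤ S ∧ Multiset.card a = B := by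
          intro a ha
          exact Multiset.mem_powersetCard.1 ha
        have hEVs : ∀ a ∈ m.toFinset, EV ((seFull B fuel w' a).map (fun x => term + x)) (μ a) := by
          intro a ha
          have ham := Multiset.mem_toFinset.1 ha
          obtain ⟨haS, hacard⟩ := hmem a ham
          have ha0 : a ≠ 0 := by
            intro h0
            rw [h0] at hacard
            simp at hacard
            omega
          have hamd : md a + 1 ≤ fuel := by
            have : md a < md H := md_lt hmdH (fun x hx => hdepthS x (Multiset.mem_of_le haS hx))
            omega
          exact EV_map_add term (ih w' a ha0 hamd)
        have hsupp : p.support ⊆ (m.toFinset : Finset (Multiset RTree)) := by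
          intro x hx
          rw [Finset.mem_coe, Multiset.mem_toFinset]
          by_contra hxm
          exact (PMF.mem_support_iff _ _).1 hx (PMF.ofMultiset_apply_of_notMem (hs := hm0) hxm)
        have key := EV_bind p (fun H' => (seFull B fuel w' H').map (fun x => term + x))
          m.toFinset hsupp μ hEVs
        have hsum : ∑ a ∈ m.toFinset, (p a).toReal * μ a
            = w * (L H : ℝ) / (Multiset.card H : ℝ) := by
          obtain ⟨k, hk⟩ : ∃ k, B = k + 1 := ⟨B - 1, by omega⟩
          have hcm : Multiset.card m = (Multiset.card S).choose B := by
            rw [hmdef, Multiset.card_powersetCard]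
          have hchpos : 0 < (Multiset.card S).choose B := Nat.choose_pos (le_of_lt hn)
          have hch : ((Multiset.card S).choose B : ℝ) ≠ 0 := by
            exact_mod_cast Nat.pos_iff_ne_zero.1 hchpos
          have hBR : ((B:ℝ)) ≠ 0 := by positivity
          have hpa : ∀ a ∈ m.toFinset,
              (p a).toReal = (m.count a : ℝ) / ((Multiset.card S).choose B : ℝ) := by
            intro a _
            rw [hpdef, PMF.ofMultiset_apply, ENNReal.toReal_div, hcm]
            rw [ENNReal.toReal_natCast, ENNReal.toReal_natCast,
              count_irrel (fun a b => Classical.propDecidable (a = b)) inferInstance a m]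
          have hstep : ∀ a ∈ m.toFinset, (p a).toReal * μ a
              = (m.count a : ℝ) / ((Multiset.card S).choose B : ℝ) * term
                + (m.count a : ℝ) * (L a : ℝ)
                  * (w' / (((Multiset.card S).choose B : ℝ) * (B : ℝ))) := by
            intro a ha
            rw [hpa a ha]
            simp only [hmudef]
            have hacard : Multiset.card a = B := (hmem a (Multiset.mem_toFinset.1 ha)).2
            rw [hacard]
            ring
          rw [Finset.sum_congr rfl hstep, Finset.sum_add_distrib,
            ← Finset.sum_mul, ← Finset.sum_mul, ← Finset.sum_div]
          have hc1 : (∑ a ∈ m.toFinset, (m.count a : ℝ)) = ((Multiset.card S).choose B : ℝ) := by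
            have h := Multiset.toFinset_sum_count_eq m
            rw [hcm] at h
            exact_mod_cast h
          have hc2 : (∑ a ∈ m.toFinset, (m.count a : ℝ) * (L a : ℝ))
              = ((Multiset.card S - 1).choose k * L S : ℕ) := by
            have hnat : ∑ a ∈ m.toFinset, m.count a * L a
                = (Multiset.card S - 1).choose k * L S := by
              have h1 : (m.map L).sum = ∑ a ∈ m.toFinset, m.count a • L a :=
                Finset.sum_multiset_map_count m L
              have h2 : (m.map L).sum
                  = (Multiset.card S - 1).choose k * (S.map leaves).sum := by
                rw [hmdef, hk]
                exact powerset_sum leaves S k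
              simp only [smul_eq_mul] at h1
              rw [← h1, h2]
              rfl
            exact_mod_cast hnat
          rw [hc1, hc2]
          have key : ((Multiset.card S : ℝ)) * ((Multiset.card S - 1).choose k : ℝ)
              = ((Multiset.card S).choose B : ℝ) * (B : ℝ) := by
            obtain ⟨q, hq⟩ : ∃ q, Multiset.card S = q + 1 := ⟨Multiset.card S - 1, by omega⟩
            have := Nat.add_one_mul_choose_eq q k
            rw [hq, hk]
            simp only [Nat.add_sub_cancel]
            exact_mod_cast this
          rw [hLH, htermdef, hw'def]
          push_cast
          have hcHne : (Multiset.card H : ℝ) ≠ 0 := ne_of_gt hcH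
          field_simp
          linear_combination (w * ((L S : ℝ))) * key
        rwa [hsum] at key

open RTree in
/-- **Stochastic enumeration is unbiased**: for every budget `B ≥ 1` and every
finite rooted tree `t`, the expected value of the output of Algorithm S
(started with weight `1` from the singleton population `{root}`) equals the
number of leaves of `t`. -/
theorem stochastic_enumeration_unbiased (B : ℕ) (hB : 1 ≤ B) (t : RTree)
    (fuel : ℕ) (hfuel : depth t + 2 ≤ fuel) :
    ∫ x, x ∂((seFull B fuel 1 ({t} : Multiset RTree)).toMeasure)
      = (leaves t : ℝ) := by
  have h := EV_seFull B hB fuel 1 ({t} : Multiset RTree) (by simp) (by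
    have : md ({t} : Multiset RTree) = depth t := by
      show md (t ::ₘ 0) = depth t
      rw [md_cons]; simp
    omega)
  have := h.2
  simpa [L] using this
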